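/- Let K be a field and let F be in K^{m×n} (a constant matrix). Then A_x(F) = {p ∈ K[x]^{1×m} : p(0)·F = 0} is a free K[x]-module of rank m, and every matrix P in K[x]^{m×m} whose rows form a K[x]-basis of A_x(F) satisfies deg det(P) = rank(F). -/

import Mathlib

open Polynomial Matrix Set Submodule Module

noncomputable section

/-- The module `A_M(F)` of row vectors `p` with `p F = 0 (mod M)`. -/
def approxModule {K : Type*} [Field K] {m n : ℕ} (M : K[X]) (F : Matrix (Fin m) (Fin n) K[X]) :
    Submodule K[X] (Fin m → K[X]) where
  carrier := {p | ∀ j, M ∣ (p ᵥ* F) j}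
  add_mem' := by
    intro p q hp hq j
    rw [Matrix.add_vecMul, Pi.add_apply]
    exact dvd_add (hp j) (hq j)
  zero_mem' := by
    intro j
    simp [Matrix.zero_vecMul]
  smul_mem' := by
    intro c p hp j
    rw [Matrix.smul_vecMul, Pi.smul_apply, smul_eq_mul]
    exact Dvd.dvd.mul_left (hp j) c

/-- A family of row vectors forms a basis of a submodule `N` if it is linearly
independent over `K[x]` and spans `N`. -/
def IsBasisOf {K : Type*} [Field K] {m : ℕ} {ι : Type*}
    (rows : ι → Fin m → K[X]) (N : Submodule K[X] (Fin m → K[X])) : Prop :=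
  LinearIndependent K[X] rows ∧ Submodule.span K[X] (Set.range rows) = N

/-- for a constant matrix `F ∈ K^{m×n}`, the module `A_x(F)` (for the
polynomial matrix obtained from `F` and the modulus `x`) is free of rank `m`, and every
matrix `P ∈ K[x]^{m×m}` whose rows form a basis of `A_x(F)` satisfies
`deg det(P) = rank(F)`. -/
theorem stmt15 {K : Type*} [Field K] {m n : ℕ} (F : Matrix (Fin m) (Fin n) K) :
    Nonempty (Basis (Fin m) K[X] (approxModule (X : K[X]) (F.map Polynomial.C))) ∧
      ∀ P : Matrix (Fin m) (Fin m) K[X],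
        IsBasisOf (fun i => P i) (approxModule (X : K[X]) (F.map Polynomial.C)) →
          P.det.degree = (F.rank : WithBot ℕ) := by
  classical
  set A := approxModule (X : K[X]) (F.map Polynomial.C) with hA
  -- membership characterization
  have memA : ∀ p : Fin m → K[X], p ∈ A ↔ (fun i => (p i).eval 0) ᵥ* F = 0 := by
    intro p
    have key : ∀ j, ((p ᵥ* F.map C) j).eval 0 = ((fun i => (p i).eval 0) ᵥ* F) j := by
      intro j
      simp [Matrix.vecMul, dotProduct, Polynomial.eval_finset_sum]
    constructor
    · intro h; funext j
      have := h j
      rw [Polynomial.X_dvd_iff, Polynomial.coeff_zero_eq_eval_zero, key] at this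
      exact this
    · intro h j
      rw [Polynomial.X_dvd_iff, Polynomial.coeff_zero_eq_eval_zero, key, h, Pi.zero_apply]
  -- adapted basis of K^m
  set W : Submodule K (Fin m → K) := LinearMap.ker F.vecMulLinear with hW
  have hrank : finrank K (LinearMap.range F.vecMulLinear) = F.rank := by
    rw [← Matrix.mulVecLin_transpose, ← Matrix.rank, Matrix.rank_transpose]
  have hrn : F.rank + finrank K W = m := by
    have := LinearMap.finrank_range_add_finrank_ker F.vecMulLinear
    rw [hrank] at this
    simpa using this
  obtain ⟨W', hcompl⟩ := W.exists_isCompl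
  set k := finrank K W with hk
  set r := finrank K W' with hr
  have hkr : k + r = m := by
    have := Submodule.finrank_add_eq_of_isCompl hcompl
    simpa using this
  have hrrank : r = F.rank := by omega
  let bW : Basis (Fin k) K W := Module.finBasis K W
  let bW' : Basis (Fin r) K W' := Module.finBasis K W'
  let b0 : Basis (Fin k ⊕ Fin r) K (Fin m → K) :=
    (bW.prod bW').map (Submodule.prodEquivOfIsCompl W W' hcompl)
  let e : (Fin k ⊕ Fin r) ≃ Fin m := finSumFinEquiv.trans (finCongr hkr)
  let u : Basis (Fin m) K (Fin m → K) := b0.reindex e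
  have heL : ∀ j : Fin k, ((e (Sum.inl j) : Fin m) : ℕ) = (j : ℕ) := by
    intro j; simp [e]
  have heR : ∀ j : Fin r, ((e (Sum.inr j) : Fin m) : ℕ) = k + (j : ℕ) := by
    intro j; simp [e]
  set S : Set (Fin m) := {i | (i : ℕ) < k} with hS
  have hSe : ∀ i : Fin m, i ∈ S ↔ ∃ j, e (Sum.inl j) = i := by
    intro i
    constructor
    · intro hi
      rcases h : e.symm i with j | j
      · exact ⟨j, by rw [← h, Equiv.apply_symm_apply]⟩
      · exfalso
        have h2 : e (Sum.inr j) = i := by rw [← h, Equiv.apply_symm_apply]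
        have h3 : (i : ℕ) = k + (j : ℕ) := by rw [← h2]; exact heR j
        simp only [hS, mem_setOf_eq] at hi
        omega
    · rintro ⟨j, rfl⟩
      have := heL j
      simp only [hS, mem_setOf_eq, this]
      exact j.isLt
  have hb0l : ∀ j : Fin k, b0 (Sum.inl j) = (bW j : Fin m → K) := by
    intro j
    simp only [b0, Basis.map_apply]
    rw [Submodule.coe_prodEquivOfIsCompl', Basis.prod_apply_inl_fst, Basis.prod_apply_inl_snd]
    simp
  have himg : u '' S = Set.range (fun j : Fin k => (bW j : Fin m → K)) := by
    ext x
    constructor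
    · rintro ⟨i, hi, rfl⟩
      obtain ⟨j, rfl⟩ := (hSe i).1 hi
      exact ⟨j, by simp [u, hb0l j]⟩
    · rintro ⟨j, rfl⟩
      exact ⟨e (Sum.inl j), (hSe _).2 ⟨j, rfl⟩, by simp [u, hb0l j]⟩
  have hWspan : W = span K (u '' S) := by
    rw [himg]
    have : Set.range (fun j : Fin k => (bW j : Fin m → K)) = W.subtype '' Set.range bW := by
      rw [← Set.range_comp]; rfl
    rw [this, Submodule.span_image, Basis.span_eq, Submodule.map_subtype_top]
  -- the candidate basis rows over K[X]
  set c : Fin m → K[X] := fun i => if i ∈ S then 1 else X with hc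
  set rows : Fin m → (Fin m → K[X]) := fun i j => c i * Polynomial.C (u i j) with hrows
  set P0 : Matrix (Fin m) (Fin m) K[X] := Matrix.of rows with hP0
  set B : Matrix (Fin m) (Fin m) K := Matrix.of (fun i j => u i j) with hB
  -- B invertible
  have hBinv : IsUnit B.det := by
    have : Bᵀ = (Pi.basisFun K (Fin m)).toMatrix u := by
      ext i j
      simp [hB, Basis.toMatrix_apply]
    have := (Basis.invertibleToMatrix (Pi.basisFun K (Fin m)) u)
    rw [← Matrix.det_transpose, ‹Bᵀ = _›]
    exact Matrix.isUnit_det_of_invertible _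
  have hd : B.det ≠ 0 := hBinv.ne_zero
  -- determinant of P0
  have hP0eq : P0 = Matrix.diagonal c * B.map Polynomial.C := by
    ext i j
    simp [hP0, hB, Matrix.diagonal_mul, hrows]
  have hprod : (∏ i, c i) = X ^ r := by
    rw [← Equiv.prod_comp e, Fintype.prod_sum_type]
    have h1 : ∀ j : Fin k, c (e (Sum.inl j)) = 1 := by
      intro j; simp only [hc, if_pos ((hSe _).2 ⟨j, rfl⟩)]
    have h2 : ∀ j : Fin r, c (e (Sum.inr j)) = X := by
      intro j
      have : e (Sum.inr j) ∉ S := by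
        simp only [hS, mem_setOf_eq, heR j]; omega
      simp only [hc, if_neg this]
    simp [h1, h2]
  have hmapdet : (B.map (Polynomial.C : K →+* K[X])).det = Polynomial.C B.det := by
    have := RingHom.map_det (Polynomial.C : K →+* K[X]) B
    rw [RingHom.mapMatrix_apply] at this
    exact this.symm
  have hdetP0 : P0.det = X ^ r * Polynomial.C B.det := by
    rw [hP0eq, Matrix.det_mul, Matrix.det_diagonal, hprod, hmapdet]
  have hdegP0 : P0.det.degree = (r : WithBot ℕ) := by
    rw [hdetP0, Polynomial.degree_mul, Polynomial.degree_X_pow, Polynomial.degree_C hd,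
      add_zero]
  have hdetP0ne : P0.det ≠ 0 := by
    intro h
    rw [h, Polynomial.degree_zero] at hdegP0
    exact (by simp : (⊥ : WithBot ℕ) ≠ (r : WithBot ℕ)) hdegP0
  -- linear independence of rows
  have hli : LinearIndependent K[X] rows := by
    rw [Fintype.linearIndependent_iff]
    intro g hg
    have h1 : g ᵥ* P0 = 0 := by
      funext j
      have := congrFun hg j
      simpa [Matrix.vecMul, dotProduct, hP0] using this
    have h2 : g ᵥ* (P0 * P0.adjugate) = 0 := by
      rw [← Matrix.vecMul_vecMul, h1, Matrix.zero_vecMul]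
    rw [Matrix.mul_adjugate] at h2
    intro i
    have h3 := congrFun h2 i
    have h4 : (g ᵥ* (P0.det • (1 : Matrix (Fin m) (Fin m) K[X]))) i = P0.det * g i := by
      simp [Matrix.vecMul, dotProduct, Matrix.one_apply, mul_comm]
    rw [h4] at h3
    exact (mul_eq_zero.1 h3).resolve_left hdetP0ne
  -- rows span A
  have hrowsA : ∀ i, rows i ∈ A := by
    intro i
    rw [memA]
    by_cases hi : i ∈ S
    · have hu : u i ∈ W := by
        rw [hWspan]
        exact Submodule.subset_span ⟨i, hi, rfl⟩
      have : (fun l => ((rows i l).eval 0)) = u i := by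
        funext l; simp [hrows, hc, if_pos hi]
      rw [this]
      simpa [hW, Matrix.vecMulLinear] using hu
    · have : (fun l => ((rows i l).eval 0)) = (0 : Fin m → K) := by
        funext l; simp [hrows, hc, if_neg hi]
      rw [this, Matrix.zero_vecMul]
  have hspan : span K[X] (Set.range rows) = A := by
    apply le_antisymm
    · rw [Submodule.span_le]
      rintro _ ⟨i, rfl⟩
      exact hrowsA i
    · intro p hp
      -- write p in terms of C ∘ u rows
      set q : Fin m → K[X] := p ᵥ* ((B⁻¹).map Polynomial.C) with hq
      have hqB : q ᵥ* (B.map Polynomial.C) = p := by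
        rw [hq, Matrix.vecMul_vecMul]
        have : (B⁻¹).map (Polynomial.C : K →+* K[X]) * B.map Polynomial.C = 1 := by
          rw [← Matrix.map_mul, Matrix.nonsing_inv_mul B hBinv, Matrix.map_one _ (map_zero _) (map_one _)]
        rw [this, Matrix.vecMul_one]
      have hpsum : ∀ j, p j = ∑ i, q i * Polynomial.C (u i j) := by
        intro j
        rw [← hqB]
        simp [Matrix.vecMul, dotProduct, hB]
      have hev : (fun i => (p i).eval 0) = ∑ i, (q i).eval 0 • u i := by
        funext j
        rw [hpsum j]
        simp [Polynomial.eval_finset_sum]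
      have hevW : (fun i => (p i).eval 0) ∈ W := by
        rw [hW, LinearMap.mem_ker]
        have := (memA p).1 hp
        simpa [Matrix.vecMulLinear] using this
      have hrep : ∀ i, u.repr (fun i => (p i).eval 0) i = (q i).eval 0 := by
        intro i
        rw [hev]
        have h := u.repr_sum_self (fun i => (q i).eval 0)
        exact congrFun h i
      have hdvd : ∀ i, c i ∣ q i := by
        intro i
        by_cases hi : i ∈ S
        · simp [hc, if_pos hi]
        · simp only [hc, if_neg hi]
          rw [Polynomial.X_dvd_iff, Polynomial.coeff_zero_eq_eval_zero]
          rw [← hrep i]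
          have hmem : (fun i => (p i).eval 0) ∈ span K (u '' S) := by
            rw [← hWspan]; exact hevW
          have hsupp := (u.mem_span_image.1 hmem)
          by_contra hne
          exact hi (hsupp (Finsupp.mem_support_iff.2 hne))
      choose t ht using hdvd
      rw [mem_span_range_iff_exists_fun]
      refine ⟨t, ?_⟩
      funext j
      have : ∀ i, t i • rows i j = q i * Polynomial.C (u i j) := by
        intro i
        simp only [hrows, smul_eq_mul, ht i]
        ring
      calc (∑ i, t i • rows i) j = ∑ i, t i • rows i j := by
            simp
        _ = ∑ i, q i * Polynomial.C (u i j) := by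
            exact Finset.sum_congr rfl fun i _ => this i
        _ = p j := (hpsum j).symm
  -- Part 1: the basis of A
  have hbasis : Nonempty (Basis (Fin m) K[X] A) := by
    exact ⟨(Basis.span hli).map (LinearEquiv.ofEq _ _ hspan)⟩
  refine ⟨hbasis, ?_⟩
  -- Part 2
  intro P hP
  obtain ⟨hPli, hPspan⟩ := hP
  have hPA : ∀ i, (P i) ∈ span K[X] (Set.range rows) := by
    intro i
    rw [hspan, ← hPspan]
    exact Submodule.subset_span ⟨i, rfl⟩
  have hrowsP : ∀ i, rows i ∈ span K[X] (Set.range fun i => P i) := by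
    intro i
    rw [hPspan, ← hspan]
    exact Submodule.subset_span ⟨i, rfl⟩
  have h1 : ∀ i, ∃ qi : Fin m → K[X], ∑ l, qi l • rows l = P i :=
    fun i => (mem_span_range_iff_exists_fun _).1 (hPA i)
  have h2 : ∀ i, ∃ qi : Fin m → K[X], ∑ l, qi l • (P l) = rows i :=
    fun i => (mem_span_range_iff_exists_fun _).1 (hrowsP i)
  choose Q hQ using h1
  choose Q' hQ' using h2
  have hQP : Matrix.of Q * P0 = P := by
    refine Matrix.ext fun i j => ?_
    have := congrFun (hQ i) j
    simpa [Matrix.mul_apply, hP0] using this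
  have hQ'P : Matrix.of Q' * P = P0 := by
    refine Matrix.ext fun i j => ?_
    have := congrFun (hQ' i) j
    simpa [Matrix.mul_apply, hP0] using this
  have hQQ' : (Matrix.of Q').det * (Matrix.of Q).det * P0.det = P0.det := by
    calc (Matrix.of Q').det * (Matrix.of Q).det * P0.det
        = (Matrix.of Q' * (Matrix.of Q * P0)).det := by
          rw [Matrix.det_mul, Matrix.det_mul, mul_assoc]
      _ = P0.det := by rw [hQP, hQ'P]
  have hunit : (Matrix.of Q').det * (Matrix.of Q).det = 1 := by
    have := mul_right_cancel₀ hdetP0ne (hQQ'.trans (one_mul P0.det).symm)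
    exact this
  have hdegQ : (Matrix.of Q).det.degree = 0 :=
    Polynomial.degree_eq_zero_of_isUnit (IsUnit.of_mul_eq_one _ (by rw [mul_comm] at hunit; exact hunit))
  calc P.det.degree = (Matrix.of Q * P0).det.degree := by rw [hQP]
    _ = ((Matrix.of Q).det * P0.det).degree := by rw [Matrix.det_mul]
    _ = (Matrix.of Q).det.degree + P0.det.degree := Polynomial.degree_mul
    _ = (0 : WithBot ℕ) + (r : WithBot ℕ) := by rw [hdegQ, hdegP0]
    _ = (r : WithBot ℕ) := zero_add _
    _ = (F.rank : WithBot ℕ) := by rw [hrrank]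


end
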